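/- Let c be a real number with 0 < |c| < √2. Then the Ginzburg–Landau energy of the soliton, E(Q_c) := (1/8)·∫_ℝ (η_c′(x))²/(1−η_c(x)) dx + (1/2)·∫_ℝ (1−η_c(x))·v_c(x)² dx + (1/4)·∫_ℝ η_c(x)² dx, equals (2−c²)^(3/2)/3. -/

import Mathlib

set_option maxHeartbeats 1000000


open MeasureTheory

/-- Explicit value of the Ginzburg-Landau energy of the soliton `Q_c`:
`E(Q_c) = (2-c²)^(3/2)/3`. -/
theorem energy_of_soliton (c : ℝ) (hc0 : c ≠ 0) (hc : |c| < Real.sqrt 2)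
    (η v : ℝ → ℝ)
    (hη : ∀ x : ℝ, η x =
      (2 - c ^ 2) / (2 * (Real.cosh (Real.sqrt (2 - c ^ 2) * x / 2)) ^ 2))
    (hv : ∀ x : ℝ, v x = -c * η x / (2 * (1 - η x))) :
    (1 / 8) * (∫ x : ℝ, (deriv η x) ^ 2 / (1 - η x))
      + (1 / 2) * (∫ x : ℝ, (1 - η x) * (v x) ^ 2)
      + (1 / 4) * (∫ x : ℝ, (η x) ^ 2)
      = (2 - c ^ 2) ^ ((3 : ℝ) / 2) / 3 := by
  classical
  have hc2 : c ^ 2 < 2 := by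
    have h1 : |c| ^ 2 < (Real.sqrt 2) ^ 2 :=
      pow_lt_pow_left₀ hc (abs_nonneg c) two_ne_zero
    rwa [sq_abs, Real.sq_sqrt (by norm_num : (2:ℝ) ≥ 0)] at h1
  have hK : (0:ℝ) < 2 - c ^ 2 := by linarith
  have hcp : (0:ℝ) < c ^ 2 := by positivity
  set a : ℝ := Real.sqrt (2 - c ^ 2) with ha_def
  have ha : 0 < a := Real.sqrt_pos.mpr hK
  have ha2 : a ^ 2 = 2 - c ^ 2 := Real.sq_sqrt hK.le
  -- basic pointwise facts
  have hC : ∀ x : ℝ, (0:ℝ) < Real.cosh (a * x / 2) := fun x => Real.cosh_pos _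
  have hC1 : ∀ x : ℝ, (1:ℝ) ≤ Real.cosh (a * x / 2) := fun x => Real.one_le_cosh _
  have hid : ∀ x : ℝ, (Real.cosh (a * x / 2)) ^ 2 - (Real.sinh (a * x / 2)) ^ 2 = 1 :=
    fun x => Real.cosh_sq_sub_sinh_sq _
  have hηx : ∀ x : ℝ, η x = (2 - c ^ 2) / (2 * (Real.cosh (a * x / 2)) ^ 2) := hη
  have hηpos : ∀ x : ℝ, 0 < η x := by
    intro x; rw [hηx x]; have := hC x; positivity
  have h1η : ∀ x : ℝ, c ^ 2 / 2 ≤ 1 - η x := by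
    intro x
    rw [hηx x]
    rw [le_sub_iff_add_le, div_add_div _ _ (by norm_num) (by positivity),
      div_le_one (by positivity)]
    have hC2' : (1:ℝ) ≤ (Real.cosh (a * x / 2)) ^ 2 := one_le_pow₀ (hC1 x)
    nlinarith [mul_nonneg hK.le (by linarith : (0:ℝ) ≤ (Real.cosh (a * x / 2)) ^ 2 - 1)]
  have h1ηpos : ∀ x : ℝ, 0 < 1 - η x := fun x => lt_of_lt_of_le (by positivity) (h1η x)
  -- derivative of η
  have hηd : ∀ x : ℝ, HasDerivAt η
      (-((2 - c ^ 2) * a * Real.sinh (a * x / 2)) / (2 * (Real.cosh (a * x / 2)) ^ 3)) x := by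
    intro x
    have hηf : η = fun x => (2 - c ^ 2) / (2 * (Real.cosh (a * x / 2)) ^ 2) := funext hηx
    rw [hηf]
    have hs : HasDerivAt (fun x : ℝ => a * x / 2) (a / 2) x := by
      simpa using ((hasDerivAt_id x).const_mul a).div_const 2
    have hcosh : HasDerivAt (fun x : ℝ => Real.cosh (a * x / 2))
        (Real.sinh (a * x / 2) * (a / 2)) x := (Real.hasDerivAt_cosh _).comp x hs
    have hden : HasDerivAt (fun x : ℝ => 2 * (Real.cosh (a * x / 2)) ^ 2)
        (2 * ((2 : ℕ) * (Real.cosh (a * x / 2)) ^ 1 * (Real.sinh (a * x / 2) * (a / 2)))) x :=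
      (hcosh.pow 2).const_mul 2
    have hne : 2 * (Real.cosh (a * x / 2)) ^ 2 ≠ 0 := by have := hC x; positivity
    have := (hasDerivAt_const x (2 - c ^ 2)).div hden hne
    refine this.congr_deriv ?_
    have := hC x
    field_simp
    ring
  have hderiv_eq : ∀ x : ℝ, deriv η x
      = -((2 - c ^ 2) * a * Real.sinh (a * x / 2)) / (2 * (Real.cosh (a * x / 2)) ^ 3) :=
    fun x => (hηd x).deriv
  -- pointwise identity : A = 2 η² - 4 B
  have hA : ∀ x : ℝ, (deriv η x) ^ 2 / (1 - η x)
      = 2 * (η x) ^ 2 - 4 * ((1 - η x) * (v x) ^ 2) := by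
    intro x
    set C := Real.cosh (a * x / 2) with hCdef
    set S := Real.sinh (a * x / 2) with hSdef
    have hCpos : (0:ℝ) < C := hC x
    have hC1' : (1:ℝ) ≤ C := hC1 x
    have hS : S ^ 2 = C ^ 2 - 1 := by have := hid x; linarith
    rw [hderiv_eq x, hv x, hηx x]
    have hnum : (-((2 - c ^ 2) * a * S) / (2 * C ^ 3)) ^ 2
        = ((2 - c ^ 2) ^ 2 * a ^ 2 * (C ^ 2 - 1)) / (4 * C ^ 6) := by
      rw [div_pow, show (-((2 - c ^ 2) * a * S)) ^ 2 = (2 - c ^ 2) ^ 2 * a ^ 2 * S ^ 2 by ring,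
        hS]
      ring_nf
    rw [hnum]
    rw [show (1:ℝ) - (2 - c ^ 2) / (2 * C ^ 2) = (2 * C ^ 2 - (2 - c ^ 2)) / (2 * C ^ 2) by
      field_simp]
    have hden : (0:ℝ) < 2 * C ^ 2 - (2 - c ^ 2) := by nlinarith
    rw [ha2]
    field_simp
    ring
  -- continuity
  have hcontη : Continuous η := by
    have hηf : η = fun x => (2 - c ^ 2) / (2 * (Real.cosh (a * x / 2)) ^ 2) := funext hηx
    rw [hηf]
    apply Continuous.div continuous_const
    · fun_prop
    · intro x; have := hC x; positivity
  have hcontv : Continuous v := by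
    have hvf : v = fun x => -c * η x / (2 * (1 - η x)) := funext hv
    rw [hvf]
    apply Continuous.div (by fun_prop)
    · fun_prop
    · intro x; have := h1ηpos x; positivity
  -- integrability of η²
  have hintC : Integrable (fun x : ℝ => (η x) ^ 2) := by
    set M : ℝ := 4 * (2 - c ^ 2) ^ 2 * (1 + 4 / a ^ 2) with hM
    have hbound : ∀ x : ℝ, ‖(η x) ^ 2‖ ≤ M * (1 + x ^ 2)⁻¹ := by
      intro x
      have hCpos : (0:ℝ) < Real.cosh (a * x / 2) := hC x
      rw [Real.norm_eq_abs, abs_of_nonneg (by positivity)]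
      have habs : Real.cosh (a * x / 2) = Real.cosh (a * |x| / 2) := by
        rcases abs_cases x with ⟨h1, _⟩ | ⟨h1, _⟩
        · rw [h1]
        · rw [h1, show a * -x / 2 = -(a * x / 2) by ring, Real.cosh_neg]
      have hexp : 1 + a * |x| / 2 ≤ Real.exp (a * |x| / 2) := by
        have := Real.add_one_le_exp (a * |x| / 2); linarith
      have hcosh_ge : Real.exp (a * |x| / 2) / 2 ≤ Real.cosh (a * |x| / 2) := by
        rw [Real.cosh_eq]
        have := (Real.exp_pos (-(a * |x| / 2))).le
        linarith
      have hge : (1 + a * |x| / 2) / 2 ≤ Real.cosh (a * x / 2) := by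
        rw [habs]
        calc (1 + a * |x| / 2) / 2 ≤ Real.exp (a * |x| / 2) / 2 := by linarith
        _ ≤ _ := hcosh_ge
      have ht0 : (0:ℝ) ≤ a * |x| / 2 := by positivity
      have h1t : (1:ℝ) ≤ 1 + a * |x| / 2 := by linarith
      set t := a * |x| / 2 with htdef
      have hC2 : ((1 + t) / 2) ^ 2 ≤ (Real.cosh (a * x / 2)) ^ 2 :=
        pow_le_pow_left₀ (by positivity) hge 2
      have hη_le : (2 - c ^ 2) / (2 * (Real.cosh (a * x / 2)) ^ 2)
          ≤ 2 * (2 - c ^ 2) / (1 + t) ^ 2 := by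
        rw [div_le_div_iff₀ (by positivity) (by positivity)]
        nlinarith [hC2, hK]
      have h4 : 4 / a ^ 2 * t ^ 2 = |x| ^ 2 := by
        rw [htdef]
        have h5 : (a * |x| / 2) ^ 2 = a ^ 2 * x ^ 2 / 4 := by
          rw [div_pow, mul_pow, sq_abs]; norm_num
        rw [h5]
        field_simp
        rw [sq_abs]
      have hsqt : t ^ 2 ≤ (1 + t) ^ 2 := by nlinarith
      have hpos4 : (0:ℝ) ≤ 4 / a ^ 2 := by positivity
      have hx2 : 1 + x ^ 2 ≤ (1 + 4 / a ^ 2) * (1 + t) ^ 2 := by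
        have hx : x ^ 2 = |x| ^ 2 := (sq_abs x).symm
        nlinarith [mul_le_mul_of_nonneg_left hsqt hpos4, h4, sq_nonneg t]
      have key : ((2 - c ^ 2) / (2 * (Real.cosh (a * x / 2)) ^ 2)) ^ 2 * (1 + x ^ 2) ≤ M := by
        calc ((2 - c ^ 2) / (2 * (Real.cosh (a * x / 2)) ^ 2)) ^ 2 * (1 + x ^ 2)
            ≤ (2 * (2 - c ^ 2) / (1 + t) ^ 2) ^ 2 * ((1 + 4 / a ^ 2) * (1 + t) ^ 2) := by
              apply mul_le_mul (pow_le_pow_left₀ (by positivity) hη_le 2) hx2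
                (by positivity) (by positivity)
          _ = 4 * (2 - c ^ 2) ^ 2 * (1 + 4 / a ^ 2) / (1 + t) ^ 2 := by
              field_simp; ring
          _ ≤ 4 * (2 - c ^ 2) ^ 2 * (1 + 4 / a ^ 2) :=
              div_le_self (by positivity) (by nlinarith)
          _ = M := by rw [hM]
      rw [hηx x, ← div_eq_mul_inv, le_div_iff₀ (by positivity : (0:ℝ) < 1 + x ^ 2)]
      exact key
    exact (integrable_inv_one_add_sq.const_mul M).mono'
      ((hcontη.pow 2).aestronglyMeasurable) (Filter.Eventually.of_forall hbound)
  -- integrability of B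
  have hBle : ∀ x : ℝ, ‖(1 - η x) * (v x) ^ 2‖ ≤ (η x) ^ 2 := by
    intro x
    have h1 := h1η x
    have h1p := h1ηpos x
    rw [Real.norm_eq_abs, abs_of_nonneg (by positivity)]
    have h2 : (1 - η x) * (v x) ^ 2 = c ^ 2 * (η x) ^ 2 / (4 * (1 - η x)) := by
      rw [hv x]; field_simp; ring
    rw [h2, div_le_iff₀ (by positivity)]
    nlinarith [sq_nonneg (η x), hηpos x]
  have hintB : Integrable (fun x : ℝ => (1 - η x) * (v x) ^ 2) :=
    hintC.mono' (((continuous_const.sub hcontη).mul (hcontv.pow 2)).aestronglyMeasurable)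
      (Filter.Eventually.of_forall hBle)
  -- value of ∫ η²
  have hIC : (∫ x : ℝ, (η x) ^ 2) = 2 * (2 - c ^ 2) ^ 2 / (3 * a) := by
    set F : ℝ → ℝ := fun x => ((2 - c ^ 2) ^ 2 / (2 * a)) *
        (Real.sinh (a * x / 2) / Real.cosh (a * x / 2)
          - (Real.sinh (a * x / 2) / Real.cosh (a * x / 2)) ^ 3 / 3) with hF
    have hFd : ∀ x : ℝ, HasDerivAt F ((η x) ^ 2) x := by
      intro x
      rw [hηx x]
      have hs : HasDerivAt (fun x : ℝ => a * x / 2) (a / 2) x := by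
        simpa using ((hasDerivAt_id x).const_mul a).div_const 2
      have hcosh : HasDerivAt (fun x : ℝ => Real.cosh (a * x / 2))
          (Real.sinh (a * x / 2) * (a / 2)) x := (Real.hasDerivAt_cosh _).comp x hs
      have hsinh : HasDerivAt (fun x : ℝ => Real.sinh (a * x / 2))
          (Real.cosh (a * x / 2) * (a / 2)) x := (Real.hasDerivAt_sinh _).comp x hs
      have hCpos : (0:ℝ) < Real.cosh (a * x / 2) := hC x
      have ht : HasDerivAt (fun x : ℝ => Real.sinh (a * x / 2) / Real.cosh (a * x / 2))
          ((Real.cosh (a * x / 2) * (a / 2) * Real.cosh (a * x / 2)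
            - Real.sinh (a * x / 2) * (Real.sinh (a * x / 2) * (a / 2))) /
            (Real.cosh (a * x / 2)) ^ 2) x := hsinh.div hcosh hCpos.ne'
      have h3 := (ht.pow 3).div_const 3
      have := ((ht.sub h3).const_mul ((2 - c ^ 2) ^ 2 / (2 * a)))
      refine this.congr_deriv ?_
      have hid' := hid x
      symm
      norm_num
      field_simp
      linear_combination (-(Real.cosh (a*x/2)^2 - Real.sinh (a*x/2)^2 + 1)) * hid'
    -- limits of t = sinh/cosh
    have heqT : ∀ x : ℝ, Real.sinh (a * x / 2) / Real.cosh (a * x / 2)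
        = (1 - Real.exp (-(a * x))) / (1 + Real.exp (-(a * x))) := by
      intro x
      rw [Real.sinh_eq, Real.cosh_eq]
      have h1 : Real.exp (a * x / 2) > 0 := Real.exp_pos _
      have h2 : Real.exp (-(a * x / 2)) > 0 := Real.exp_pos _
      rw [div_eq_div_iff (by positivity) (by positivity)]
      have hprod4 : Real.exp (a * x / 2) * Real.exp (-(a * x)) = Real.exp (-(a * x) / 2) := by
        rw [← Real.exp_add]; ring_nf
      field_simp
      rw [neg_div] at hprod4
      linear_combination 2 * hprod4
    have heqB : ∀ x : ℝ, Real.sinh (a * x / 2) / Real.cosh (a * x / 2)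
        = (Real.exp (a * x) - 1) / (Real.exp (a * x) + 1) := by
      intro x
      rw [Real.sinh_eq, Real.cosh_eq]
      have h2 : Real.exp (-(a * x / 2)) > 0 := Real.exp_pos _
      rw [div_eq_div_iff (by positivity) (by positivity)]
      have hprod3 : Real.exp (-(a * x) / 2) * Real.exp (a * x) = Real.exp (a * x / 2) := by
        rw [← Real.exp_add]; ring_nf
      field_simp
      rw [neg_div] at hprod3
      linear_combination (-2 : ℝ) * hprod3
    have hT : Filter.Tendsto (fun x : ℝ => Real.exp (-(a * x))) Filter.atTop (nhds 0) :=
      Real.tendsto_exp_neg_atTop_nhds_zero.comp (Filter.Tendsto.const_mul_atTop ha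
        Filter.tendsto_id)
    have hB : Filter.Tendsto (fun x : ℝ => Real.exp (a * x)) Filter.atBot (nhds 0) :=
      Real.tendsto_exp_atBot.comp (Filter.Tendsto.const_mul_atBot ha Filter.tendsto_id)
    have htT : Filter.Tendsto (fun x => Real.sinh (a * x / 2) / Real.cosh (a * x / 2))
        Filter.atTop (nhds 1) := by
      rw [funext heqT]
      have := Filter.Tendsto.div ((tendsto_const_nhds :
          Filter.Tendsto (fun _ : ℝ => (1:ℝ)) Filter.atTop (nhds 1)).sub hT)
        ((tendsto_const_nhds :
          Filter.Tendsto (fun _ : ℝ => (1:ℝ)) Filter.atTop (nhds 1)).add hT)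
        (by norm_num : (1:ℝ)+0 ≠ 0)
      simpa [Pi.div_def] using this
    have htB : Filter.Tendsto (fun x => Real.sinh (a * x / 2) / Real.cosh (a * x / 2))
        Filter.atBot (nhds (-1)) := by
      rw [funext heqB]
      have := Filter.Tendsto.div (hB.sub (tendsto_const_nhds :
          Filter.Tendsto (fun _ : ℝ => (1:ℝ)) Filter.atBot (nhds 1)))
        (hB.add (tendsto_const_nhds :
          Filter.Tendsto (fun _ : ℝ => (1:ℝ)) Filter.atBot (nhds 1)))
        (by norm_num : (0:ℝ)+1 ≠ 0)
      simpa [Pi.div_def] using this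
    have hg : Continuous (fun y : ℝ => ((2 - c ^ 2) ^ 2 / (2 * a)) * (y - y ^ 3 / 3)) := by
      fun_prop
    have hFtop : Filter.Tendsto F Filter.atTop (nhds ((2 - c ^ 2) ^ 2 / (3 * a))) := by
      have h2 : Filter.Tendsto F Filter.atTop
          (nhds (((2 - c ^ 2) ^ 2 / (2 * a)) * ((1:ℝ) - (1:ℝ) ^ 3 / 3))) := by
        rw [hF]; exact (hg.tendsto 1).comp htT
      have h1 : ((2 - c ^ 2) ^ 2 / (2 * a)) * ((1:ℝ) - (1:ℝ) ^ 3 / 3)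
          = (2 - c ^ 2) ^ 2 / (3 * a) := by
        field_simp; ring
      rwa [h1] at h2
    have hFbot : Filter.Tendsto F Filter.atBot (nhds (-((2 - c ^ 2) ^ 2 / (3 * a)))) := by
      have h2 : Filter.Tendsto F Filter.atBot
          (nhds (((2 - c ^ 2) ^ 2 / (2 * a)) * ((-1:ℝ) - (-1:ℝ) ^ 3 / 3))) := by
        rw [hF]; exact (hg.tendsto (-1)).comp htB
      have h1 : ((2 - c ^ 2) ^ 2 / (2 * a)) * ((-1:ℝ) - (-1:ℝ) ^ 3 / 3)
          = -((2 - c ^ 2) ^ 2 / (3 * a)) := by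
        field_simp; ring
      rwa [h1] at h2
    have := MeasureTheory.integral_of_hasDerivAt_of_tendsto hFd hintC hFbot hFtop
    rw [this]
    ring
  -- combine
  have hfunA : (fun x : ℝ => (deriv η x) ^ 2 / (1 - η x))
      = fun x : ℝ => 2 * (η x) ^ 2 - 4 * ((1 - η x) * (v x) ^ 2) := funext hA
  rw [hfunA]
  rw [integral_sub ((hintC.const_mul 2)) ((hintB.const_mul 4)),
    integral_const_mul, integral_const_mul, hIC]
  have hrpow : (2 - c ^ 2) ^ ((3 : ℝ) / 2) = a ^ 3 := by
    rw [ha_def, Real.sqrt_eq_rpow, ← Real.rpow_natCast ((2 - c ^ 2) ^ ((1:ℝ)/2)) 3,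
      ← Real.rpow_mul hK.le]
    norm_num
  rw [hrpow]
  have haK : (2 - c ^ 2) = a ^ 2 := ha2.symm
  rw [haK]
  field_simp
  ring
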